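/- Let {D_{n,i} : 1 ≤ i ≤ n, n ≥ 1} be a martingale-difference array adapted to a fixed filtration {F_i : i ≥ 0} (i.e. D_{n,i} is F_i-measurable, integrable, and E[D_{n,i} | F_{i−1}] = 0 for all 1 ≤ i ≤ n), and let {c_n : n ≥ 1} be a non-increasing sequence of positive numbers. Define S_{n,k} := Σ_{i=1}^k D_{n,i} for 1 ≤ k ≤ n, and S_{n,k} := Σ_{i=1}^n D_{n,i} + Σ_{j=n+1}^k D_{j,j} for k > n; and R_n := Σ_{j=1}^{n−1} (D_{n,j} − D_{n−1,j}). Then for all integers n ≤ N, all p ≥ 1 and all λ > 0: 2^{−p} λ^p P( max_{n ≤ m ≤ N} c_m |S_{m,m}| > λ ) ≤ c_N^p E[|S_{n,N}|^p] + Σ_{j=n}^{N−1} (c_j^p − c_{j+1}^p) E[|S_{n,j}|^p] + E[ ( Σ_{j=n+1}^N c_j |R_j| )^p ]. -/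

import Mathlib

open MeasureTheory ProbabilityTheory Filter
open scoped ENNReal NNReal

noncomputable section

namespace ChowBirnbaumMarshall

variable {Ω : Type*} {mΩ : MeasurableSpace Ω}

/-- `S_{n,k} = Σ_{i=1}^k D_{n,i}` for `k ≤ n`, and
`S_{n,k} = Σ_{i=1}^n D_{n,i} + Σ_{j=n+1}^k D_{j,j}` for `k > n`. -/
def Sarr (D : ℕ → ℕ → Ω → ℝ) (n k : ℕ) (ω : Ω) : ℝ :=
  if k ≤ n then ∑ i ∈ Finset.Icc 1 k, D n i ω
  else (∑ i ∈ Finset.Icc 1 n, D n i ω) + ∑ j ∈ Finset.Icc (n + 1) k, D j j ω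

/-- `R_n = Σ_{j=1}^{n−1} (D_{n,j} − D_{n−1,j})`. -/
def Rarr (D : ℕ → ℕ → Ω → ℝ) (n : ℕ) (ω : Ω) : ℝ :=
  ∑ j ∈ Finset.Icc 1 (n - 1), (D n j ω - D (n - 1) j ω)

theorem Sarr_eq (D : ℕ → ℕ → Ω → ℝ) {n k : ℕ} (hnk : n ≤ k) (ω : Ω) :
    Sarr D n k ω = (∑ i ∈ Finset.Icc 1 n, D n i ω) + ∑ j ∈ Finset.Ioc n k, D j j ω := by
  unfold Sarr
  by_cases h : k ≤ n
  · have : k = n := le_antisymm h hnk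
    subst this
    simp
  · simp [h, Finset.Icc_add_one_left_eq_Ioc]

theorem Sarr_sm (ℱ : Filtration ℕ mΩ) (D : ℕ → ℕ → Ω → ℝ)
    (hadapt : ∀ n i : ℕ, 1 ≤ i → i ≤ n → StronglyMeasurable[ℱ i] (D n i))
    {n k : ℕ} (hnk : n ≤ k) : StronglyMeasurable[ℱ k] (Sarr D n k) := by
  have : Sarr D n k = fun ω => (∑ i ∈ Finset.Icc 1 n, D n i ω) + ∑ j ∈ Finset.Ioc n k, D j j ω :=
    funext fun ω => Sarr_eq D hnk ω
  rw [this]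
  apply StronglyMeasurable.add
  · apply Finset.stronglyMeasurable_fun_sum
    intro i hi
    rw [Finset.mem_Icc] at hi
    exact (hadapt n i hi.1 hi.2).mono (ℱ.mono (hi.2.trans hnk))
  · apply Finset.stronglyMeasurable_fun_sum
    intro j hj
    rw [Finset.mem_Ioc] at hj
    exact (hadapt j j (by omega) le_rfl).mono (ℱ.mono hj.2)

theorem Sarr_integrable (μ : Measure Ω) (ℱ : Filtration ℕ mΩ) (D : ℕ → ℕ → Ω → ℝ)
    (hint : ∀ n i : ℕ, 1 ≤ i → i ≤ n → Integrable (D n i) μ)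
    {n k : ℕ} (hnk : n ≤ k) : Integrable (Sarr D n k) μ := by
  have : Sarr D n k = fun ω => (∑ i ∈ Finset.Icc 1 n, D n i ω) + ∑ j ∈ Finset.Ioc n k, D j j ω :=
    funext fun ω => Sarr_eq D hnk ω
  rw [this]
  apply Integrable.add
  · apply integrable_finset_sum
    intro i hi
    rw [Finset.mem_Icc] at hi
    exact hint n i hi.1 hi.2
  · apply integrable_finset_sum
    intro j hj
    rw [Finset.mem_Ioc] at hj
    exact hint j j (by omega) le_rfl

theorem Sarr_condexp (μ : Measure Ω) [IsProbabilityMeasure μ]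
    (ℱ : Filtration ℕ mΩ) (D : ℕ → ℕ → Ω → ℝ)
    (hadapt : ∀ n i : ℕ, 1 ≤ i → i ≤ n → StronglyMeasurable[ℱ i] (D n i))
    (hint : ∀ n i : ℕ, 1 ≤ i → i ≤ n → Integrable (D n i) μ)
    (hmds : ∀ n i : ℕ, 1 ≤ i → i ≤ n → μ[D n i | ℱ (i - 1)] =ᵐ[μ] 0)
    {n m j : ℕ} (hnm : n ≤ m) (hmj : m ≤ j) :
    μ[Sarr D n j | ℱ m] =ᵐ[μ] Sarr D n m := by
  have hdecomp : Sarr D n j = fun ω => Sarr D n m ω + ∑ k ∈ Finset.Ioc m j, D k k ω := by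
    funext ω
    rw [Sarr_eq D (hnm.trans hmj) ω, Sarr_eq D hnm ω, add_assoc,
      Finset.sum_Ioc_consecutive _ hnm hmj]
  rw [hdecomp]
  have hintm : Integrable (Sarr D n m) μ := Sarr_integrable μ ℱ D hint hnm
  have hintsum : Integrable (fun ω => ∑ k ∈ Finset.Ioc m j, D k k ω) μ := by
    apply integrable_finset_sum
    intro k hk
    rw [Finset.mem_Ioc] at hk
    exact hint k k (by omega) le_rfl
  refine (condExp_add hintm hintsum (ℱ m)).trans ?_
  have h1 : μ[Sarr D n m | ℱ m] =ᵐ[μ] Sarr D n m := by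
    rw [condExp_of_stronglyMeasurable (ℱ.le m) (Sarr_sm ℱ D hadapt hnm) hintm]
  have h2 : μ[(fun ω => ∑ k ∈ Finset.Ioc m j, D k k ω) | ℱ m] =ᵐ[μ] 0 := by
    have h1' : (fun ω => ∑ k ∈ Finset.Ioc m j, D k k ω) = ∑ k ∈ Finset.Ioc m j, D k k := by
      funext ω; simp
    rw [h1']
    refine (condExp_finsetSum (fun k hk =>
      hint k k (by rw [Finset.mem_Ioc] at hk; omega) le_rfl) (μ := μ) (s := Finset.Ioc m j) (m := ℱ m)).trans ?_
    have h3 : ∀ k ∈ Finset.Ioc m j, μ[D k k | ℱ m] =ᵐ[μ] 0 := by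
      intro k hk
      rw [Finset.mem_Ioc] at hk
      have hle : ℱ m ≤ ℱ (k - 1) := ℱ.mono (by omega)
      refine (condExp_condExp_of_le (μ := μ) (f := D k k) hle (ℱ.le (k-1))).symm.trans ?_
      refine (condExp_congr_ae (hmds k k (by omega) le_rfl)).trans ?_
      rw [condExp_zero]
    calc ∑ k ∈ Finset.Ioc m j, μ[D k k | ℱ m]
        =ᵐ[μ] ∑ k ∈ Finset.Ioc m j, (0 : Ω → ℝ) := eventuallyEq_sum h3
      _ = 0 := by simp
  filter_upwards [h1, h2] with ω hω1 hω2
  simp only [Pi.add_apply, hω1, hω2, Pi.zero_apply, add_zero]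

/-- L1 submartingale property on sets of `ℱ m`. -/
theorem setLintegral_abs_le (μ : Measure Ω) [IsProbabilityMeasure μ]
    (ℱ : Filtration ℕ mΩ) (D : ℕ → ℕ → Ω → ℝ)
    (hadapt : ∀ n i : ℕ, 1 ≤ i → i ≤ n → StronglyMeasurable[ℱ i] (D n i))
    (hint : ∀ n i : ℕ, 1 ≤ i → i ≤ n → Integrable (D n i) μ)
    (hmds : ∀ n i : ℕ, 1 ≤ i → i ≤ n → μ[D n i | ℱ (i - 1)] =ᵐ[μ] 0)
    {n m j : ℕ} (hnm : n ≤ m) (hmj : m ≤ j)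
    {A : Set Ω} (hA : MeasurableSet[ℱ m] A) :
    ∫⁻ ω in A, ↑‖Sarr D n m ω‖₊ ∂μ ≤ ∫⁻ ω in A, ↑‖Sarr D n j ω‖₊ ∂μ := by
  have hintm : Integrable (Sarr D n m) μ := Sarr_integrable μ ℱ D hint hnm
  have hintj : Integrable (Sarr D n j) μ := Sarr_integrable μ ℱ D hint (hnm.trans hmj)
  have key : ∫ ω in A, |Sarr D n m ω| ∂μ ≤ ∫ ω in A, |Sarr D n j ω| ∂μ := by
    have hcond := Sarr_condexp μ ℱ D hadapt hint hmds hnm hmj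
    have h1 : ∫ ω in A, |Sarr D n m ω| ∂μ = ∫ ω in A, |(μ[Sarr D n j | ℱ m]) ω| ∂μ := by
      apply integral_congr_ae
      filter_upwards [ae_restrict_of_ae hcond] with ω hω
      rw [hω]
    rw [h1]
    exact setIntegral_abs_condExp_le hA (Sarr D n j)
  have e1 : ∫⁻ ω in A, ↑‖Sarr D n m ω‖₊ ∂μ = ENNReal.ofReal (∫ ω in A, |Sarr D n m ω| ∂μ) := by
    rw [ofReal_integral_eq_lintegral_ofReal hintm.abs.integrableOn
      (Filter.Eventually.of_forall fun ω => abs_nonneg _)]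
    simp_rw [← Real.norm_eq_abs, ofReal_norm, enorm_eq_nnnorm]
  have e2 : ∫⁻ ω in A, ↑‖Sarr D n j ω‖₊ ∂μ = ENNReal.ofReal (∫ ω in A, |Sarr D n j ω| ∂μ) := by
    rw [ofReal_integral_eq_lintegral_ofReal hintj.abs.integrableOn
      (Filter.Eventually.of_forall fun ω => abs_nonneg _)]
    simp_rw [← Real.norm_eq_abs, ofReal_norm, enorm_eq_nnnorm]
  rw [e1, e2]
  exact ENNReal.ofReal_le_ofReal key

/-- Markov-Hölder amplification: a linear set-bound implies the p-power set-bound. -/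
theorem amplify (μ : Measure Ω) {A : Set Ω} (hAfin : μ A ≠ ⊤)
    {f : Ω → ℝ} (hf : AEStronglyMeasurable f μ)
    {a b p : ℝ} (ha : 0 < a) (hb : 0 < b) (hp : 1 ≤ p)
    (H : ENNReal.ofReal a * μ A ≤ ENNReal.ofReal b * ∫⁻ ω in A, ↑‖f ω‖₊ ∂μ) :
    ENNReal.ofReal (a ^ p) * μ A ≤
      ENNReal.ofReal (b ^ p) * ∫⁻ ω in A, (↑‖f ω‖₊ : ℝ≥0∞) ^ p ∂μ := by
  have hp0 : (0:ℝ) < p := lt_of_lt_of_le one_pos hp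
  by_cases hA0 : μ A = 0
  · simp [hA0]
  set I : ℝ≥0∞ := ∫⁻ ω in A, (↑‖f ω‖₊ : ℝ≥0∞) ^ p ∂μ with hI
  have hq : (1:ℝ≥0∞) ≤ ENNReal.ofReal p := by
    rw [← ENNReal.ofReal_one]; exact ENNReal.ofReal_le_ofReal hp
  have holder : ∫⁻ ω in A, ↑‖f ω‖₊ ∂μ ≤ I ^ (1/p) * μ A ^ (1 - 1/p) := by
    have h := eLpNorm_le_eLpNorm_mul_rpow_measure_univ (μ := μ.restrict A) hq
      (hf.restrict)
    rw [eLpNorm_one_eq_lintegral_enorm] at h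
    rw [eLpNorm_eq_lintegral_rpow_enorm_toReal (by positivity) (by simp)] at h
    rw [ENNReal.toReal_ofReal hp0.le] at h
    simpa [Measure.restrict_apply_univ, ENNReal.toReal_one, enorm_eq_nnnorm] using h
  have step : ENNReal.ofReal a * μ A ≤ ENNReal.ofReal b * (I ^ (1/p) * μ A ^ (1 - 1/p)) := by
    refine H.trans ?_
    exact mul_le_mul_right holder _
  have hsplit : μ A = μ A ^ (1/p) * μ A ^ (1 - 1/p) := by
    rw [← ENNReal.rpow_add _ _ hA0 hAfin]
    norm_num
  have hmc : μ A ^ (1 - 1/p) ≠ 0 := by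
    simp only [ne_eq, ENNReal.rpow_eq_zero_iff, not_or]
    constructor
    · rintro ⟨h, -⟩; exact hA0 h
    · rintro ⟨h, -⟩; exact hAfin h
  have hmt : μ A ^ (1 - 1/p) ≠ ⊤ := ENNReal.rpow_ne_top_of_nonneg (by
    have : 1/p ≤ 1 := by
      rw [div_le_one hp0]; exact hp
    linarith) hAfin
  have step2 : ENNReal.ofReal a * μ A ^ (1/p) ≤ ENNReal.ofReal b * I ^ (1/p) := by
    rw [← ENNReal.mul_le_mul_iff_left hmc hmt]
    calc ENNReal.ofReal a * μ A ^ (1/p) * μ A ^ (1 - 1/p)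
        = ENNReal.ofReal a * μ A := by rw [mul_assoc, ← hsplit]
      _ ≤ ENNReal.ofReal b * (I ^ (1/p) * μ A ^ (1 - 1/p)) := step
      _ = ENNReal.ofReal b * I ^ (1/p) * μ A ^ (1 - 1/p) := by ring
  have final := ENNReal.rpow_le_rpow step2 hp0.le
  rw [ENNReal.mul_rpow_of_nonneg _ _ hp0.le, ENNReal.mul_rpow_of_nonneg _ _ hp0.le,
    ← ENNReal.rpow_mul, ← ENNReal.rpow_mul, one_div_mul_cancel hp0.ne', ENNReal.rpow_one,
    ENNReal.rpow_one, ENNReal.ofReal_rpow_of_nonneg ha.le hp0.le,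
    ENNReal.ofReal_rpow_of_nonneg hb.le hp0.le] at final
  exact final

theorem Sarr_diag (D : ℕ → ℕ → Ω → ℝ) {n m : ℕ} (hnm : n ≤ m) (ω : Ω) :
    Sarr D m m ω = Sarr D n m ω + ∑ j ∈ Finset.Ioc n m, Rarr D j ω := by
  induction m with
  | zero =>
    have : n = 0 := Nat.le_zero.1 hnm
    subst this; simp
  | succ m ih =>
    rcases Nat.lt_or_ge n (m+1) with hlt | hge
    · have hnm' : n ≤ m := by omega
      have step : Sarr D (m+1) (m+1) ω = Sarr D m m ω + D (m+1) (m+1) ω + Rarr D (m+1) ω := by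
        have e1 : Sarr D (m+1) (m+1) ω = ∑ i ∈ Finset.Icc 1 (m+1), D (m+1) i ω := by
          unfold Sarr; simp
        have e2 : Sarr D m m ω = ∑ i ∈ Finset.Icc 1 m, D m i ω := by
          unfold Sarr; simp
        have e3 : Rarr D (m+1) ω = ∑ i ∈ Finset.Icc 1 m, (D (m+1) i ω - D m i ω) := by
          unfold Rarr; simp
        rw [e1, e2, e3, Finset.sum_Icc_succ_top (by omega), Finset.sum_sub_distrib]
        ring
      have snext : Sarr D n (m+1) ω = Sarr D n m ω + D (m+1) (m+1) ω := by
        rw [Sarr_eq D hnm' ω, Sarr_eq D (by omega : n ≤ m+1) ω,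
          Finset.sum_Ioc_succ_top hnm']
        ring
      rw [step, ih hnm', snext, Finset.sum_Ioc_succ_top hnm']
      ring
    · have : n = m + 1 := by omega
      subst this; simp

theorem measurableSet_lt_mul_abs {m' : MeasurableSpace Ω} {f : Ω → ℝ}
    (hf : StronglyMeasurable[m'] f) (r b : ℝ) :
    MeasurableSet[m'] {ω | b < r * |f ω|} :=
  measurableSet_lt measurable_const (hf.measurable.abs.const_mul _)

theorem measurableSet_mul_abs_le {m' : MeasurableSpace Ω} {f : Ω → ℝ}
    (hf : StronglyMeasurable[m'] f) (r b : ℝ) :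
    MeasurableSet[m'] {ω | r * |f ω| ≤ b} :=
  measurableSet_le (hf.measurable.abs.const_mul _) measurable_const

theorem sum_sub_telescope (g : ℕ → ℝ) {m N : ℕ} (h : m ≤ N) :
    ∑ j ∈ Finset.Ico m N, (g j - g (j+1)) = g m - g N := by
  induction N with
  | zero =>
    have : m = 0 := Nat.le_zero.1 h
    subst this; simp
  | succ N ih =>
    rcases Nat.lt_or_ge m (N+1) with hlt | hge
    · have h' : m ≤ N := by omega
      rw [Finset.sum_Ico_succ_top h', ih h']
      ring
    · have : m = N + 1 := by omega
      subst this; simp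

/-- Lemma B.2 (a martingale-array extension of the Chow–Birnbaum–Marshall inequality). -/
theorem chow_birnbaum_marshall
    (μ : Measure Ω) [IsProbabilityMeasure μ]
    (ℱ : Filtration ℕ mΩ) (D : ℕ → ℕ → Ω → ℝ)
    (hadapt : ∀ n i : ℕ, 1 ≤ i → i ≤ n → StronglyMeasurable[ℱ i] (D n i))
    (hint : ∀ n i : ℕ, 1 ≤ i → i ≤ n → Integrable (D n i) μ)
    (hmds : ∀ n i : ℕ, 1 ≤ i → i ≤ n → μ[D n i | ℱ (i - 1)] =ᵐ[μ] 0)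
    (c : ℕ → ℝ) (hcpos : ∀ n, 0 < c n) (hcdec : Antitone c)
    (n N : ℕ) (hnN : n ≤ N) (p : ℝ) (hp : 1 ≤ p) (lam : ℝ) (hlam : 0 < lam) :
    ENNReal.ofReal (2 ^ (-p) * lam ^ p) *
        μ {ω | ∃ m : ℕ, n ≤ m ∧ m ≤ N ∧ lam < c m * |Sarr D m m ω|} ≤
      ENNReal.ofReal (c N ^ p) *
          (∫⁻ ω, ENNReal.ofReal (|Sarr D n N ω| ^ p) ∂μ) +
        (∑ j ∈ Finset.Ico n N, ENNReal.ofReal (c j ^ p - c (j + 1) ^ p) *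
          ∫⁻ ω, ENNReal.ofReal (|Sarr D n j ω| ^ p) ∂μ) +
        ∫⁻ ω, ENNReal.ofReal ((∑ j ∈ Finset.Icc (n + 1) N, c j * |Rarr D j ω|) ^ p) ∂μ := by
  classical
  have hp0 : (0:ℝ) < p := lt_of_lt_of_le one_pos hp
  set a : ℝ := lam / 2 with ha_def
  have ha : 0 < a := by positivity
  -- notation conversion
  have hconv : ∀ x : ℝ, ENNReal.ofReal (|x| ^ p) = (↑‖x‖₊ : ℝ≥0∞) ^ p := fun x => by
    rw [← Real.norm_eq_abs, ← ENNReal.ofReal_rpow_of_nonneg (norm_nonneg x) hp0.le,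
      ofReal_norm, enorm_eq_nnnorm]
  -- ambient measurability
  have hDmeas : ∀ k i : ℕ, 1 ≤ i → i ≤ k → Measurable (D k i) :=
    fun k i h1 h2 => ((hadapt k i h1 h2).mono (ℱ.le i)).measurable
  have hXmeas : ∀ j, n ≤ j → Measurable (Sarr D n j) := fun j hj =>
    ((Sarr_sm ℱ D hadapt hj).mono (ℱ.le j)).measurable
  set T : Ω → ℝ := fun ω => ∑ j ∈ Finset.Icc (n+1) N, c j * |Rarr D j ω| with hT_def
  have hRmeas : ∀ j : ℕ, 1 ≤ j → Measurable (Rarr D j) := by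
    intro j hj
    apply Finset.measurable_sum
    intro i hi
    rw [Finset.mem_Icc] at hi
    exact (hDmeas j i hi.1 (by omega)).sub (hDmeas (j-1) i hi.1 hi.2)
  have hTmeas : Measurable T := by
    apply Finset.measurable_sum
    intro j hj
    rw [Finset.mem_Icc] at hj
    exact ((hRmeas j (by omega)).abs.const_mul _)
  have hTnonneg : ∀ ω, 0 ≤ T ω := fun ω =>
    Finset.sum_nonneg fun j _ => mul_nonneg (hcpos j).le (abs_nonneg _)
  -- the events
  set E : Set Ω := {ω | ∃ m : ℕ, n ≤ m ∧ m ≤ N ∧ lam < c m * |Sarr D m m ω|} with hE_def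
  set E1 : Set Ω := {ω | ∃ m : ℕ, n ≤ m ∧ m ≤ N ∧ a < c m * |Sarr D n m ω|} with hE1_def
  set E2 : Set Ω := {ω | a < T ω} with hE2_def
  have h_incl : E ⊆ E1 ∪ E2 := by
    rintro ω ⟨m, hm1, hm2, hm3⟩
    have key : c m * |Sarr D m m ω| ≤ c m * |Sarr D n m ω| + T ω := by
      rw [Sarr_diag D hm1 ω]
      calc c m * |Sarr D n m ω + ∑ j ∈ Finset.Ioc n m, Rarr D j ω|
          ≤ c m * (|Sarr D n m ω| + ∑ j ∈ Finset.Ioc n m, |Rarr D j ω|) := by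
            apply mul_le_mul_of_nonneg_left _ (hcpos m).le
            exact (abs_add_le _ _).trans (by
              gcongr
              exact Finset.abs_sum_le_sum_abs _ _)
        _ = c m * |Sarr D n m ω| + ∑ j ∈ Finset.Ioc n m, c m * |Rarr D j ω| := by
            rw [mul_add, Finset.mul_sum]
        _ ≤ c m * |Sarr D n m ω| + ∑ j ∈ Finset.Ioc n m, c j * |Rarr D j ω| := by
            gcongr with j hj
            rw [Finset.mem_Ioc] at hj
            exact hcdec hj.2
        _ ≤ c m * |Sarr D n m ω| + T ω := by
            gcongr
            apply Finset.sum_le_sum_of_subset_of_nonneg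
            · intro j hj
              rw [Finset.mem_Ioc] at hj
              rw [Finset.mem_Icc]
              omega
            · intro j _ _
              exact mul_nonneg (hcpos j).le (abs_nonneg _)
    by_contra hcon
    rw [Set.mem_union] at hcon
    push_neg at hcon
    obtain ⟨hc1, hc2⟩ := hcon
    have h1 : c m * |Sarr D n m ω| ≤ a := by
      by_contra hlt
      exact hc1 ⟨m, hm1, hm2, lt_of_not_ge hlt⟩
    have h2 : T ω ≤ a := le_of_not_gt fun hh => hc2 hh
    have : lam < a + a := lt_of_lt_of_le hm3 (key.trans (add_le_add h1 h2))
    rw [ha_def] at this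
    linarith
  -- left-hand constant
  have hlhs : 2 ^ (-p) * lam ^ p = a ^ p := by
    rw [ha_def, Real.div_rpow hlam.le (by norm_num : (0:ℝ) ≤ 2),
      Real.rpow_neg (by norm_num : (0:ℝ) ≤ 2), div_eq_mul_inv]
    ring
  -- Markov bound for the remainder term
  have hE2bound : ENNReal.ofReal (a ^ p) * μ E2 ≤
      ∫⁻ ω, ENNReal.ofReal (T ω ^ p) ∂μ := by
    have hgm : Measurable fun ω => ENNReal.ofReal (T ω ^ p) := by
      have : (fun ω => ENNReal.ofReal (T ω ^ p)) =
          fun ω => (ENNReal.ofReal (T ω)) ^ p := by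
        funext ω
        rw [ENNReal.ofReal_rpow_of_nonneg (hTnonneg ω) hp0.le]
      rw [this]
      exact hTmeas.ennreal_ofReal.pow_const _
    have hsub : E2 ⊆ {ω | ENNReal.ofReal (a ^ p) ≤ ENNReal.ofReal (T ω ^ p)} := by
      intro ω hω
      exact ENNReal.ofReal_le_ofReal (Real.rpow_le_rpow ha.le (le_of_lt hω) hp0.le)
    calc ENNReal.ofReal (a ^ p) * μ E2
        ≤ ENNReal.ofReal (a ^ p) * μ {ω | ENNReal.ofReal (a ^ p) ≤ ENNReal.ofReal (T ω ^ p)} :=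
          mul_le_mul_right (measure_mono hsub) _
      _ ≤ ∫⁻ ω, ENNReal.ofReal (T ω ^ p) ∂μ :=
          mul_meas_ge_le_lintegral₀ hgm.aemeasurable _
  -- the first-entry sets
  set A : ℕ → Set Ω := fun m =>
    {ω | a < c m * |Sarr D n m ω| ∧ ∀ k, n ≤ k → k < m → c k * |Sarr D n k ω| ≤ a} with hA_def
  have hAmeasF : ∀ m, n ≤ m → MeasurableSet[ℱ m] (A m) := by
    intro m hm
    have hrepr : A m = {ω | a < c m * |Sarr D n m ω|} ∩
        ⋂ k ∈ Finset.Ico n m, {ω | c k * |Sarr D n k ω| ≤ a} := by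
      ext ω
      simp only [hA_def, Set.mem_setOf_eq, Set.mem_inter_iff, Set.mem_iInter, Finset.mem_Ico]
      constructor
      · rintro ⟨h1, h2⟩
        exact ⟨h1, fun k hk => h2 k hk.1 hk.2⟩
      · rintro ⟨h1, h2⟩
        exact ⟨h1, fun k hk1 hk2 => h2 k ⟨hk1, hk2⟩⟩
    rw [hrepr]
    apply MeasurableSet.inter
    · exact measurableSet_lt_mul_abs (Sarr_sm ℱ D hadapt hm) _ _
    · apply Finset.measurableSet_biInter
      intro k hk
      rw [Finset.mem_Ico] at hk
      exact measurableSet_mul_abs_le ((Sarr_sm ℱ D hadapt hk.1).mono (ℱ.mono hk.2.le)) _ _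
  have hAmeas : ∀ m, n ≤ m → MeasurableSet (A m) := fun m hm => ℱ.le m _ (hAmeasF m hm)
  have hAsub : E1 ⊆ ⋃ m ∈ Finset.Icc n N, A m := by
    rintro ω ⟨m, hm1, hm2, hm3⟩
    have hex : ∃ m, n ≤ m ∧ a < c m * |Sarr D n m ω| := ⟨m, hm1, hm3⟩
    have hfind := Nat.find_spec hex
    have hfle : Nat.find hex ≤ m := Nat.find_min' hex ⟨hm1, hm3⟩
    simp only [Set.mem_iUnion, Finset.mem_Icc]
    refine ⟨Nat.find hex, ⟨hfind.1, hfle.trans hm2⟩, hfind.2, ?_⟩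
    intro k hk1 hk2
    have := Nat.find_min hex hk2
    push_neg at this
    exact le_of_not_gt fun hh => absurd (this hk1) (not_le.2 hh)
  have hdisj : Set.PairwiseDisjoint ↑(Finset.Icc n N) A := by
    intro i hi j hj hij
    rw [Finset.coe_Icc, Set.mem_Icc] at hi hj
    apply Set.disjoint_left.2
    intro ω hωi hωj
    rcases lt_or_gt_of_ne hij with h | h
    · exact absurd hωi.1 (not_lt.2 (hωj.2 i hi.1 h))
    · exact absurd hωj.1 (not_lt.2 (hωi.2 j hj.1 h))
  -- per-set p-power bound
  have hkey : ∀ m, n ≤ m → m ≤ N → ∀ j, m ≤ j → j ≤ N →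
      ENNReal.ofReal (a ^ p) * μ (A m) ≤
        ENNReal.ofReal (c m ^ p) * ∫⁻ ω in A m, (↑‖Sarr D n j ω‖₊ : ℝ≥0∞) ^ p ∂μ := by
    intro m hm hmN j hmj hjN
    have hlin : ENNReal.ofReal a * μ (A m) ≤
        ENNReal.ofReal (c m) * ∫⁻ ω in A m, ↑‖Sarr D n j ω‖₊ ∂μ := by
      have s1 : ENNReal.ofReal a * μ (A m) = ∫⁻ _ in A m, ENNReal.ofReal a ∂μ :=
        (setLIntegral_const _ _).symm
      have s2 : ∫⁻ _ in A m, ENNReal.ofReal a ∂μ ≤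
          ∫⁻ ω in A m, ENNReal.ofReal (c m * |Sarr D n m ω|) ∂μ := by
        apply setLIntegral_mono (((hXmeas m hm).abs.const_mul _).ennreal_ofReal)
        intro ω hω
        exact ENNReal.ofReal_le_ofReal hω.1.le
      have s3 : ∫⁻ ω in A m, ENNReal.ofReal (c m * |Sarr D n m ω|) ∂μ =
          ENNReal.ofReal (c m) * ∫⁻ ω in A m, ↑‖Sarr D n m ω‖₊ ∂μ := by
        simp_rw [ENNReal.ofReal_mul (hcpos m).le]
        rw [lintegral_const_mul' _ _ ENNReal.ofReal_ne_top]
        congr 1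
        apply lintegral_congr
        intro ω
        rw [← Real.norm_eq_abs, ofReal_norm, enorm_eq_nnnorm]
      have s4 : ∫⁻ ω in A m, ↑‖Sarr D n m ω‖₊ ∂μ ≤ ∫⁻ ω in A m, ↑‖Sarr D n j ω‖₊ ∂μ :=
        setLintegral_abs_le μ ℱ D hadapt hint hmds hm hmj (hAmeasF m hm)
      calc ENNReal.ofReal a * μ (A m) = ∫⁻ _ in A m, ENNReal.ofReal a ∂μ := s1
        _ ≤ ∫⁻ ω in A m, ENNReal.ofReal (c m * |Sarr D n m ω|) ∂μ := s2
        _ = ENNReal.ofReal (c m) * ∫⁻ ω in A m, ↑‖Sarr D n m ω‖₊ ∂μ := s3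
        _ ≤ ENNReal.ofReal (c m) * ∫⁻ ω in A m, ↑‖Sarr D n j ω‖₊ ∂μ := mul_le_mul_right s4 _
    exact amplify μ (measure_ne_top μ _)
      (hXmeas j (hm.trans hmj)).aestronglyMeasurable ha (hcpos m) hp hlin
  -- telescoping of the weights
  have hdel : ∀ j : ℕ, 0 ≤ c j ^ p - c (j+1) ^ p := by
    intro j
    have := Real.rpow_le_rpow (hcpos (j+1)).le (hcdec (Nat.le_succ j)) hp0.le
    linarith
  have htele : ∀ m, m ≤ N → ENNReal.ofReal (c N ^ p) +
      ∑ j ∈ Finset.Ico m N, ENNReal.ofReal (c j ^ p - c (j+1) ^ p) =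
      ENNReal.ofReal (c m ^ p) := by
    intro m hmN
    rw [← ENNReal.ofReal_sum_of_nonneg (fun j _ => hdel j),
      ← ENNReal.ofReal_add (Real.rpow_pos_of_pos (hcpos N) p).le
        (Finset.sum_nonneg fun j _ => hdel j),
      sum_sub_telescope (fun j => c j ^ p) hmN]
    ring_nf
  -- per-set Chow bound
  have hchow : ∀ m, n ≤ m → m ≤ N →
      ENNReal.ofReal (a ^ p) * μ (A m) ≤
        ENNReal.ofReal (c N ^ p) * (∫⁻ ω in A m, (↑‖Sarr D n N ω‖₊ : ℝ≥0∞) ^ p ∂μ) +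
        ∑ j ∈ Finset.Ico m N, ENNReal.ofReal (c j ^ p - c (j+1) ^ p) *
          ∫⁻ ω in A m, (↑‖Sarr D n j ω‖₊ : ℝ≥0∞) ^ p ∂μ := by
    intro m hm hmN
    have hc0 : ENNReal.ofReal (c m ^ p) ≠ 0 :=
      (ENNReal.ofReal_pos.2 (Real.rpow_pos_of_pos (hcpos m) p)).ne'
    rw [← ENNReal.mul_le_mul_iff_right hc0 ENNReal.ofReal_ne_top]
    calc ENNReal.ofReal (c m ^ p) * (ENNReal.ofReal (a ^ p) * μ (A m))
        = (ENNReal.ofReal (c N ^ p) +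
            ∑ j ∈ Finset.Ico m N, ENNReal.ofReal (c j ^ p - c (j+1) ^ p)) *
            (ENNReal.ofReal (a ^ p) * μ (A m)) := by rw [htele m hmN]
      _ = ENNReal.ofReal (c N ^ p) * (ENNReal.ofReal (a ^ p) * μ (A m)) +
            ∑ j ∈ Finset.Ico m N, ENNReal.ofReal (c j ^ p - c (j+1) ^ p) *
              (ENNReal.ofReal (a ^ p) * μ (A m)) := by
          rw [add_mul, Finset.sum_mul]
      _ ≤ ENNReal.ofReal (c N ^ p) *
            (ENNReal.ofReal (c m ^ p) * ∫⁻ ω in A m, (↑‖Sarr D n N ω‖₊ : ℝ≥0∞) ^ p ∂μ) +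
            ∑ j ∈ Finset.Ico m N, ENNReal.ofReal (c j ^ p - c (j+1) ^ p) *
              (ENNReal.ofReal (c m ^ p) * ∫⁻ ω in A m, (↑‖Sarr D n j ω‖₊ : ℝ≥0∞) ^ p ∂μ) := by
          apply add_le_add
          · exact mul_le_mul_right (hkey m hm hmN N hmN le_rfl) _
          · apply Finset.sum_le_sum
            intro j hj
            rw [Finset.mem_Ico] at hj
            exact mul_le_mul_right (hkey m hm hmN j hj.1 hj.2.le) _
      _ = ENNReal.ofReal (c m ^ p) *
            (ENNReal.ofReal (c N ^ p) * (∫⁻ ω in A m, (↑‖Sarr D n N ω‖₊ : ℝ≥0∞) ^ p ∂μ) +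
            ∑ j ∈ Finset.Ico m N, ENNReal.ofReal (c j ^ p - c (j+1) ^ p) *
              ∫⁻ ω in A m, (↑‖Sarr D n j ω‖₊ : ℝ≥0∞) ^ p ∂μ) := by
          rw [mul_add, Finset.mul_sum]
          congr 1
          · ring
          · apply Finset.sum_congr rfl
            intro j _
            ring
  -- bounding sums of set-integrals over disjoint sets
  have hIbound : ∀ j, n ≤ j →
      ∑ m ∈ Finset.Icc n N, ∫⁻ ω in A m, (↑‖Sarr D n j ω‖₊ : ℝ≥0∞) ^ p ∂μ ≤
        ∫⁻ ω, (↑‖Sarr D n j ω‖₊ : ℝ≥0∞) ^ p ∂μ := by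
    intro j hj
    rw [← lintegral_biUnion_finset hdisj
      (fun m hm => hAmeas m (Finset.mem_Icc.1 hm).1) _]
    exact setLIntegral_le_lintegral _ _
  -- assembling the Chow part
  have hE1bound : ENNReal.ofReal (a ^ p) * μ E1 ≤
      ENNReal.ofReal (c N ^ p) * (∫⁻ ω, (↑‖Sarr D n N ω‖₊ : ℝ≥0∞) ^ p ∂μ) +
      ∑ j ∈ Finset.Ico n N, ENNReal.ofReal (c j ^ p - c (j+1) ^ p) *
        ∫⁻ ω, (↑‖Sarr D n j ω‖₊ : ℝ≥0∞) ^ p ∂μ := by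
    have hmu : μ E1 ≤ ∑ m ∈ Finset.Icc n N, μ (A m) :=
      (measure_mono hAsub).trans (measure_biUnion_finset_le _ _)
    calc ENNReal.ofReal (a ^ p) * μ E1
        ≤ ∑ m ∈ Finset.Icc n N, ENNReal.ofReal (a ^ p) * μ (A m) := by
          rw [← Finset.mul_sum]
          exact mul_le_mul_right hmu _
      _ ≤ ∑ m ∈ Finset.Icc n N,
            (ENNReal.ofReal (c N ^ p) * (∫⁻ ω in A m, (↑‖Sarr D n N ω‖₊ : ℝ≥0∞) ^ p ∂μ) +
            ∑ j ∈ Finset.Ico m N, ENNReal.ofReal (c j ^ p - c (j+1) ^ p) *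
              ∫⁻ ω in A m, (↑‖Sarr D n j ω‖₊ : ℝ≥0∞) ^ p ∂μ) := by
          apply Finset.sum_le_sum
          intro m hm
          rw [Finset.mem_Icc] at hm
          exact hchow m hm.1 hm.2
      _ = ENNReal.ofReal (c N ^ p) *
            (∑ m ∈ Finset.Icc n N, ∫⁻ ω in A m, (↑‖Sarr D n N ω‖₊ : ℝ≥0∞) ^ p ∂μ) +
            ∑ m ∈ Finset.Icc n N, ∑ j ∈ Finset.Ico m N,
              ENNReal.ofReal (c j ^ p - c (j+1) ^ p) *
              ∫⁻ ω in A m, (↑‖Sarr D n j ω‖₊ : ℝ≥0∞) ^ p ∂μ := by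
          rw [Finset.sum_add_distrib, Finset.mul_sum]
      _ = ENNReal.ofReal (c N ^ p) *
            (∑ m ∈ Finset.Icc n N, ∫⁻ ω in A m, (↑‖Sarr D n N ω‖₊ : ℝ≥0∞) ^ p ∂μ) +
            ∑ j ∈ Finset.Ico n N, ∑ m ∈ Finset.Icc n j,
              ENNReal.ofReal (c j ^ p - c (j+1) ^ p) *
              ∫⁻ ω in A m, (↑‖Sarr D n j ω‖₊ : ℝ≥0∞) ^ p ∂μ := by
          congr 1
          apply Finset.sum_comm'
          intro m j
          simp only [Finset.mem_Icc, Finset.mem_Ico]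
          omega
      _ ≤ ENNReal.ofReal (c N ^ p) * (∫⁻ ω, (↑‖Sarr D n N ω‖₊ : ℝ≥0∞) ^ p ∂μ) +
            ∑ j ∈ Finset.Ico n N, ENNReal.ofReal (c j ^ p - c (j+1) ^ p) *
              ∫⁻ ω, (↑‖Sarr D n j ω‖₊ : ℝ≥0∞) ^ p ∂μ := by
          apply add_le_add
          · exact mul_le_mul_right (hIbound N hnN) _
          · apply Finset.sum_le_sum
            intro j hj
            rw [Finset.mem_Ico] at hj
            rw [← Finset.mul_sum]
            apply mul_le_mul_right
            refine le_trans ?_ (hIbound j hj.1)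
            apply Finset.sum_le_sum_of_subset
            intro m hm
            rw [Finset.mem_Icc] at hm ⊢
            omega
  -- final assembly
  simp only [hconv]
  rw [hlhs]
  calc ENNReal.ofReal (a ^ p) * μ E
      ≤ ENNReal.ofReal (a ^ p) * (μ E1 + μ E2) := by
        apply mul_le_mul_right
        exact (measure_mono h_incl).trans (measure_union_le _ _)
    _ = ENNReal.ofReal (a ^ p) * μ E1 + ENNReal.ofReal (a ^ p) * μ E2 := by rw [mul_add]
    _ ≤ (ENNReal.ofReal (c N ^ p) * (∫⁻ ω, (↑‖Sarr D n N ω‖₊ : ℝ≥0∞) ^ p ∂μ) +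
          ∑ j ∈ Finset.Ico n N, ENNReal.ofReal (c j ^ p - c (j+1) ^ p) *
            ∫⁻ ω, (↑‖Sarr D n j ω‖₊ : ℝ≥0∞) ^ p ∂μ) +
          ∫⁻ ω, ENNReal.ofReal (T ω ^ p) ∂μ := add_le_add hE1bound hE2bound

end ChowBirnbaumMarshall
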